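/- Let m, n ≥ 2 with m ≠ n, let α, β be real numbers, and consider the (m+n)×(m+n) symmetric block matrix H = [[nα·I_m, β·Bᵀ],[β·B, mα·I_n]], where B is the n×m all-ones matrix. Then all eigenvalues of H are positive if and only if α + β > 0 and α − β > 0. -/

import Mathlib

open Matrix

lemma aux_sum1 {ι : Type*} [Fintype ι] (c d : ℝ) (f : ι → ℝ) :
    ∑ i, f i * (c * f i + d) = c * ∑ i, f i ^ 2 + d * ∑ i, f i := by
  rw [Finset.mul_sum, Finset.mul_sum, ← Finset.sum_add_distrib]
  exact Finset.sum_congr rfl fun i _ => by ring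

lemma aux_sum2 {ι : Type*} [Fintype ι] (c d : ℝ) (f : ι → ℝ) :
    ∑ i, f i * (d + c * f i) = c * ∑ i, f i ^ 2 + d * ∑ i, f i := by
  rw [Finset.mul_sum, Finset.mul_sum, ← Finset.sum_add_distrib]
  exact Finset.sum_congr rfl fun i _ => by ring

lemma aux_quad (m n : ℕ) (α β : ℝ)
    (B : Matrix (Fin n) (Fin m) ℝ) (hB : ∀ i j, B i j = 1)
    (x : Fin m ⊕ Fin n → ℝ) :
    star x ⬝ᵥ (Matrix.fromBlocks (((n : ℝ) * α) • (1 : Matrix (Fin m) (Fin m) ℝ))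
      (β • Bᵀ) (β • B) (((m : ℝ) * α) • (1 : Matrix (Fin n) (Fin n) ℝ))) *ᵥ x
    = n*α * (∑ i, (x (Sum.inl i))^2) + m*α*(∑ j, (x (Sum.inr j))^2)
      + 2*β*((∑ i, x (Sum.inl i))*(∑ j, x (Sum.inr j))) := by
  simp only [dotProduct, mulVec, Fintype.sum_sum_type, Pi.star_apply, star_trivial]
  simp only [fromBlocks_apply₁₁, fromBlocks_apply₁₂, fromBlocks_apply₂₁, fromBlocks_apply₂₂,
    Matrix.smul_apply, transpose_apply, hB, one_apply, smul_eq_mul, mul_ite, ite_mul, mul_one, mul_zero,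
    zero_mul, Finset.sum_ite_eq, Finset.mem_univ, if_true]
  simp only [← Finset.mul_sum]
  rw [aux_sum1, aux_sum2]
  ring

lemma aux_posDef_of_eigs {N : Type*} [Fintype N] [DecidableEq N] {A : Matrix N N ℝ}
    (hA : A.IsHermitian) (h : ∀ i, 0 < hA.eigenvalues i) : A.PosDef := by
  have hsd : A.PosSemidef := hA.posSemidef_iff_eigenvalues_nonneg.mpr fun i => (h i).le
  refine .of_dotProduct_mulVec_pos hA fun x hx => ?_
  rcases ((posSemidef_iff_dotProduct_mulVec.mp hsd).2 x).lt_or_eq with hlt | heq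
  · exact hlt
  · exfalso
    have hmv : A *ᵥ x = 0 := (hsd.dotProduct_mulVec_zero_iff x).mp heq.symm
    have hdet : A.det = 0 := Matrix.exists_mulVec_eq_zero_iff.mp ⟨x, hx, hmv⟩
    have : (0:ℝ) < A.det := by
      rw [hA.det_eq_prod_eigenvalues]
      exact Finset.prod_pos fun i _ => by simpa using h i
    simp [hdet] at this

/-- For `m, n ≥ 2` with `m ≠ n` and `B` the `n×m` all-ones matrix, all eigenvalues
of the symmetric block matrix `H = [[nα·I_m, β·Bᵀ],[β·B, mα·I_n]]` are positive if
and only if `α + β > 0` and `α − β > 0`. -/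
theorem stmt6 (m n : ℕ) (hm : 2 ≤ m) (hn : 2 ≤ n) (hmn : m ≠ n) (α β : ℝ)
    (B : Matrix (Fin n) (Fin m) ℝ) (hB : ∀ i j, B i j = 1)
    (H : Matrix (Fin m ⊕ Fin n) (Fin m ⊕ Fin n) ℝ)
    (hH : H = Matrix.fromBlocks (((n : ℝ) * α) • (1 : Matrix (Fin m) (Fin m) ℝ))
      (β • Bᵀ) (β • B) (((m : ℝ) * α) • (1 : Matrix (Fin n) (Fin n) ℝ)))
    (hHsym : H.IsHermitian) :
    (∀ i, 0 < hHsym.eigenvalues i) ↔ (0 < α + β ∧ 0 < α - β) := by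
  have hm0 : (0:ℝ) < m := by positivity
  have hn0 : (0:ℝ) < n := by exact_mod_cast (by omega : 0 < n)
  have hm0' : (0:ℝ) < m := by exact_mod_cast (by omega : 0 < m)
  have hm2 : (2:ℝ) ≤ m := by exact_mod_cast hm
  have hn2 : (2:ℝ) ≤ n := by exact_mod_cast hn
  have key : ∀ x : Fin m ⊕ Fin n → ℝ, star x ⬝ᵥ H *ᵥ x
      = n*α * (∑ i, (x (Sum.inl i))^2) + m*α*(∑ j, (x (Sum.inr j))^2)
        + 2*β*((∑ i, x (Sum.inl i))*(∑ j, x (Sum.inr j))) := by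
    intro x; rw [hH]; exact aux_quad m n α β B hB x
  constructor
  · intro hpos
    have hPD : H.PosDef := aux_posDef_of_eigs hHsym hpos
    have i0 : Fin m := ⟨0, by omega⟩
    constructor
    · have hx : (Sum.elim (fun _ => (1:ℝ)) (fun _ => (1:ℝ)) : Fin m ⊕ Fin n → ℝ) ≠ 0 := by
        intro h0
        have := congr_fun h0 (Sum.inl i0)
        simp at this
      have h1 := hPD.dotProduct_mulVec_pos hx
      rw [key] at h1
      simp only [Sum.elim_inl, Sum.elim_inr, one_pow, Finset.sum_const, Finset.card_univ,
        Fintype.card_fin, nsmul_eq_mul, mul_one] at h1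
      nlinarith [mul_pos hm0 hn0]
    · have hx : (Sum.elim (fun _ => (1:ℝ)) (fun _ => (-1:ℝ)) : Fin m ⊕ Fin n → ℝ) ≠ 0 := by
        intro h0
        have := congr_fun h0 (Sum.inl i0)
        simp at this
      have h1 := hPD.dotProduct_mulVec_pos hx
      rw [key] at h1
      simp only [Sum.elim_inl, Sum.elim_inr, one_pow, neg_one_sq, Finset.sum_const,
        Finset.card_univ, Fintype.card_fin, nsmul_eq_mul, mul_one, mul_neg] at h1
      nlinarith [mul_pos hm0 hn0]
  · rintro ⟨h1, h2⟩
    have hPD : H.PosDef := by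
      refine .of_dotProduct_mulVec_pos hHsym fun x hx => ?_
      rw [key]
      set U := ∑ i, (x (Sum.inl i))^2 with hUdef
      set W := ∑ j, (x (Sum.inr j))^2 with hWdef
      set S := ∑ i, x (Sum.inl i) with hSdef
      set T := ∑ j, x (Sum.inr j) with hTdef
      have hU : 0 ≤ U := Finset.sum_nonneg fun i _ => sq_nonneg _
      have hW : 0 ≤ W := Finset.sum_nonneg fun i _ => sq_nonneg _
      have hS : S^2 ≤ m * U := by
        have := sq_sum_le_card_mul_sum_sq (s := (Finset.univ : Finset (Fin m)))
          (f := fun i => x (Sum.inl i))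
        simpa using this
      have hT : T^2 ≤ n * W := by
        have := sq_sum_le_card_mul_sum_sq (s := (Finset.univ : Finset (Fin n)))
          (f := fun j => x (Sum.inr j))
        simpa using this
      have hUW : 0 < U + W := by
        obtain ⟨k, hk⟩ := Function.ne_iff.mp hx
        cases k with
        | inl i =>
          have h3 : (x (Sum.inl i))^2 ≤ U :=
            Finset.single_le_sum (fun j _ => sq_nonneg (x (Sum.inl j))) (Finset.mem_univ i)
          have : 0 < (x (Sum.inl i))^2 := (sq_nonneg _).lt_of_ne (Ne.symm (pow_ne_zero 2 hk))
          linarith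
        | inr j =>
          have h3 : (x (Sum.inr j))^2 ≤ W :=
            Finset.single_le_sum (fun j _ => sq_nonneg (x (Sum.inr j))) (Finset.mem_univ j)
          have : 0 < (x (Sum.inr j))^2 := (sq_nonneg _).lt_of_ne (Ne.symm (pow_ne_zero 2 hk))
          linarith
      have habs : |β| < α := abs_lt.mpr ⟨by linarith, by linarith⟩
      have hbabs : 0 ≤ |β| := abs_nonneg β
      have hST2 : (S*T)^2 ≤ (n*U)*(m*W) := by nlinarith [sq_nonneg S, sq_nonneg T]
      have hAM : 2*|S*T| ≤ n*U + m*W := by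
        nlinarith [hST2, sq_abs (S*T), abs_nonneg (S*T), sq_nonneg ((n:ℝ)*U - m*W), mul_nonneg (mul_nonneg hn0.le hU) (mul_nonneg hm0.le hW), mul_nonneg hn0.le hU, mul_nonneg hm0.le hW]
      have hb2 : -( |β| * (n*U + m*W)) ≤ 2*β*(S*T) := by
        have h4 : |2*β*(S*T)| ≤ |β| * (n*U + m*W) := by
          rw [abs_mul, abs_mul, abs_two]
          calc 2 * |β| * |S*T| = |β| * (2*|S*T|) := by ring
            _ ≤ |β| * (n*U + m*W) := by
              exact mul_le_mul_of_nonneg_left hAM hbabs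
        linarith [neg_abs_le (2*β*(S*T))]
      have hnUmW : 0 < n*U + m*W := by nlinarith
      nlinarith [mul_pos (sub_pos.mpr habs) hnUmW]
    exact fun i => hPD.eigenvalues_pos i
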